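/- Assume the net profit condition c + δ/a > γ/b, and let r be the unique solution in (0, b) of the adjustment-coefficient equation c + δ/(a + r) = γ/(b − r). Let f : [0,∞) → ℝ be a bounded, twice continuously differentiable function satisfying c·f''(u) + (c(b−a) − δ − γ)·f'(u) + (aγ − bδ − abc)·f(u) = 0 for all u ∈ [0,∞). Then f(u) = f(0)·e^{−r·u} for all u ∈ [0,∞). -/

import Mathlib

open Set

/-- Under the net profit condition `c + δ/a > γ/b`, if `r` is the
(unique) solution in `(0, b)` of the adjustment-coefficient equation
`c + δ/(a + r) = γ/(b - r)`, then every bounded, twice continuously differentiable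
solution `f` on `[0,∞)` of the ODE
`c f'' + (c(b-a) - δ - γ) f' + (aγ - bδ - abc) f = 0` is of the form
`f(u) = f(0) e^{-ru}`. -/

lemma constOnIci (F : ℝ → ℝ) (h : ∀ u, 0 ≤ u → HasDerivWithinAt F 0 (Ici 0) u) :
    ∀ u, 0 ≤ u → F u = F 0 := by
  intro u hu
  have hcont : ContinuousOn F (Icc 0 u) := fun x hx =>
    ((h x hx.1).continuousWithinAt).mono (Icc_subset_Ici_self)
  have hderiv : ∀ x ∈ Ico (0:ℝ) u, HasDerivWithinAt F 0 (Ici x) x := fun x hx =>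
    (h x hx.1).mono (Ici_subset_Ici.mpr hx.1)
  exact constant_of_has_deriv_right_zero hcont hderiv u ⟨hu, le_refl u⟩

lemma firstOrder (k : ℝ) (F F' : ℝ → ℝ)
    (hF : ∀ u, 0 ≤ u → HasDerivWithinAt F (F' u) (Ici 0) u)
    (heq : ∀ u, 0 ≤ u → F' u = k * F u) :
    ∀ u, 0 ≤ u → F u = F 0 * Real.exp (k * u) := by
  have hG : ∀ u, 0 ≤ u → HasDerivWithinAt (fun u => F u * Real.exp (-(k * u))) 0 (Ici 0) u := by
    intro u hu
    have he : HasDerivAt (fun u : ℝ => Real.exp (-(k * u))) (Real.exp (-(k*u)) * (-k)) u := by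
      have h1 : HasDerivAt (fun u : ℝ => -(k * u)) (-k) u := by
        simpa using ((hasDerivAt_id u).const_mul (-k))
      exact h1.exp
    have := (hF u hu).mul he.hasDerivWithinAt
    refine this.congr_deriv (Eq.symm ?_)
    rw [heq u hu]; ring
  intro u hu
  have h1 := constOnIci _ hG u hu
  simp only [mul_zero, neg_zero, Real.exp_zero, mul_one] at h1
  have h2 := congrArg (· * Real.exp (k * u)) h1
  simpa [mul_assoc, ← Real.exp_add] using h2

theorem bounded_ode_solution_is_exponential
    (a b γ δ c : ℝ) (ha : 0 < a) (hb : 0 < b) (hγ : 0 < γ) (hδ : 0 < δ) (hc : 0 < c)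
    (hnet : c + δ / a > γ / b)
    (r : ℝ) (hr_mem : r ∈ Ioo 0 b) (hr_eq : c + δ / (a + r) = γ / (b - r))
    (f f' f'' : ℝ → ℝ)
    (hbdd : ∃ M : ℝ, ∀ u : ℝ, 0 ≤ u → |f u| ≤ M)
    (hf' : ∀ u : ℝ, 0 ≤ u → HasDerivWithinAt f (f' u) (Ici 0) u)
    (hf'' : ∀ u : ℝ, 0 ≤ u → HasDerivWithinAt f' (f'' u) (Ici 0) u)
    (hf''cont : ContinuousOn f'' (Ici 0))
    (hode : ∀ u : ℝ, 0 ≤ u →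
      c * f'' u + (c * (b - a) - δ - γ) * f' u + (a * γ - b * δ - a * b * c) * f u = 0) :
    ∀ u : ℝ, 0 ≤ u → f u = f 0 * Real.exp (-r * u) := by
  
  obtain ⟨hr0, hrb⟩ := hr_mem
  have har : (a + r) ≠ 0 := by positivity
  have hbr : (b - r) ≠ 0 := by
    have : (0:ℝ) < b - r := by linarith
    linarith
  -- the characteristic quadratic at λ = -r
  have hquad : c*r^2 - (c*(b-a) - δ - γ)*r + (a*γ - b*δ - a*b*c) = 0 := by
    field_simp at hr_eq
    linear_combination -hr_eq
  -- net profit: aγ - bδ - abc < 0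
  have hC : a*γ - b*δ - a*b*c < 0 := by
    have h3 : a*b*(γ/b) < a*b*(c + δ/a) := mul_lt_mul_of_pos_left hnet (mul_pos ha hb)
    have h4 : a*b*(γ/b) = a*γ := by field_simp
    have h5 : a*b*(c+δ/a) = a*b*c + b*δ := by field_simp
    linarith
  -- the second root s
  set s : ℝ := r - (c*(b-a) - δ - γ)/c with hs_def
  have hcs : c * s = c*r - (c*(b-a) - δ - γ) := by
    rw [hs_def]; field_simp
  have hcrs : c * (r * s) = -(a*γ - b*δ - a*b*c) := by
    have h0 : c * (r * s) = r * (c * s) := by ring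
    rw [h0, hcs]; linear_combination hquad
  have hs_pos : 0 < s := by
    have h1 : 0 < c * (r * s) := by rw [hcrs]; linarith
    have h2 : 0 < r * s := by
      by_contra h
      push_neg at h
      have := mul_nonpos_of_nonneg_of_nonpos hc.le h
      linarith
    by_contra h
    push_neg at h
    have := mul_nonpos_of_nonneg_of_nonpos hr0.le h
    linarith
  -- rewrite the ODE
  have hode' : ∀ u, 0 ≤ u → f'' u = (s - r) * f' u + (r * s) * f u := by
    intro u hu
    have h1 := hode u hu
    have h2 : c * (f'' u - ((s - r) * f' u + (r * s) * f u)) = 0 := by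
      linear_combination h1 - f' u * hcs - f u * hcrs
    rcases mul_eq_zero.mp h2 with h | h
    · exact absurd h hc.ne'
    · linarith
  -- g = f' + r f satisfies g' = s g
  set g : ℝ → ℝ := fun u => f' u + r * f u with hg_def
  have hg_deriv : ∀ u, 0 ≤ u → HasDerivWithinAt g (f'' u + r * f' u) (Ici 0) u := by
    intro u hu
    exact (hf'' u hu).add ((hf' u hu).const_mul r)
  have hg_eq : ∀ u, 0 ≤ u → f'' u + r * f' u = s * g u := by
    intro u hu
    have h := hode' u hu
    simp only [hg_def]
    rw [h]; ring
  have hg_sol : ∀ u, 0 ≤ u → g u = g 0 * Real.exp (s * u) :=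
    firstOrder s g (fun u => f'' u + r * f' u) hg_deriv hg_eq
  have hsr : (0:ℝ) < s + r := by linarith
  set c0 : ℝ := g 0 / (s + r) with hc0_def
  have hc0' : c0 * (s + r) = g 0 := by
    rw [hc0_def]; field_simp
  set ψ : ℝ → ℝ := fun u => f u * Real.exp (r * u) - c0 * Real.exp ((s+r) * u) with hψ_def
  have hψ_deriv : ∀ u, 0 ≤ u → HasDerivWithinAt ψ 0 (Ici 0) u := by
    intro u hu
    have he1 : HasDerivAt (fun u : ℝ => Real.exp (r * u)) (Real.exp (r*u) * r) u := by
      have h1 : HasDerivAt (fun u : ℝ => r * u) r u := by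
        simpa using ((hasDerivAt_id u).const_mul r)
      exact h1.exp
    have he2 : HasDerivAt (fun u : ℝ => c0 * Real.exp ((s+r) * u))
        (c0 * (Real.exp ((s+r)*u) * (s+r))) u := by
      have h1 : HasDerivAt (fun u : ℝ => (s+r) * u) (s+r) u := by
        simpa using ((hasDerivAt_id u).const_mul (s+r))
      exact (h1.exp).const_mul c0
    have hd := ((hf' u hu).mul he1.hasDerivWithinAt).sub he2.hasDerivWithinAt
    refine hd.congr_deriv (Eq.symm ?_)
    have hgu : f' u + r * f u = g 0 * Real.exp (s * u) := hg_sol u hu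
    have hexp : Real.exp (s*u) * Real.exp (r*u) = Real.exp ((s+r)*u) := by
      rw [← Real.exp_add]; ring_nf
    linear_combination (-Real.exp (r*u)) * hgu - g 0 * hexp + Real.exp ((s+r)*u) * hc0'
  have hψ_const := constOnIci ψ hψ_deriv
  have hval : ∀ u, 0 ≤ u → f u * Real.exp (r*u) = (f 0 - c0) + c0 * Real.exp ((s+r)*u) := by
    intro u hu
    have h1 := hψ_const u hu
    simp only [hψ_def, mul_zero, Real.exp_zero, mul_one] at h1
    linarith
  -- boundedness forces c0 = 0
  have hc0_zero : c0 = 0 := by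
    by_contra hne
    obtain ⟨M, hM⟩ := hbdd
    set K : ℝ := (M + |f 0 - c0|) / |c0| with hK_def
    have habs : (0:ℝ) < |c0| := abs_pos.mpr hne
    have hKb : ∀ u, 0 ≤ u → Real.exp (s * u) ≤ K := by
      intro u hu
      have h1 := hval u hu
      have h2 : c0 * Real.exp ((s+r)*u) = f u * Real.exp (r*u) - (f 0 - c0) := by linarith
      have h3 : |c0| * Real.exp ((s+r)*u) ≤ M * Real.exp (r*u) + |f 0 - c0| := by
        calc |c0| * Real.exp ((s+r)*u) = |c0 * Real.exp ((s+r)*u)| := by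
              rw [abs_mul, abs_of_pos (Real.exp_pos _)]
          _ = |f u * Real.exp (r*u) - (f 0 - c0)| := by rw [h2]
          _ ≤ |f u * Real.exp (r*u)| + |f 0 - c0| := abs_sub _ _
          _ ≤ M * Real.exp (r*u) + |f 0 - c0| := by
              rw [abs_mul, abs_of_pos (Real.exp_pos _)]
              have h := mul_le_mul_of_nonneg_right (hM u hu) (Real.exp_pos (r*u)).le
              linarith
      have hsplit : Real.exp ((s+r)*u) = Real.exp (s*u) * Real.exp (r*u) := by
        rw [← Real.exp_add]; ring_nf
      rw [hsplit] at h3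
      have he1 : (1:ℝ) ≤ Real.exp (r*u) := by
        rw [show (1:ℝ) = Real.exp 0 by simp]
        exact Real.exp_le_exp.mpr (by positivity)
      have h4 : |c0| * Real.exp (s*u) * Real.exp (r*u) ≤ (M + |f 0 - c0|) * Real.exp (r*u) := by
        nlinarith [abs_nonneg (f 0 - c0), Real.exp_pos (r*u), h3]
      have h5 : |c0| * Real.exp (s*u) ≤ M + |f 0 - c0| :=
        le_of_mul_le_mul_right (by linarith [h4]) (Real.exp_pos (r*u))
      rw [hK_def, le_div_iff₀ habs]
      linarith [h5]
    have hK1 : 1 ≤ K := by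
      have := hKb 0 le_rfl
      simpa using this
    have hKpos : (0:ℝ) < K + 1 := by linarith
    have hlog : 0 < Real.log (K + 1) := Real.log_pos (by linarith)
    have hu0 : 0 ≤ Real.log (K + 1) / s := le_of_lt (div_pos hlog hs_pos)
    have hfin := hKb (Real.log (K + 1) / s) hu0
    rw [mul_div_cancel₀ _ hs_pos.ne', Real.exp_log hKpos] at hfin
    linarith
  intro u hu
  have h1 := hval u hu
  rw [hc0_zero] at h1
  simp only [sub_zero, zero_mul, add_zero] at h1
  have h2 := congrArg (· * Real.exp (-r * u)) h1
  rw [mul_assoc, ← Real.exp_add, show r*u + -r*u = 0 by ring, Real.exp_zero, mul_one] at h2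
  exact h2
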